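/- Let F be a field of characteristic p > 2, β ∈ F nonzero, and φ the F-algebra automorphism of F[t] determined by φ(t) = t + β. Then the set of φ-fixed elements {f ∈ F[t] : φ(f) = f} equals the F-subalgebra of F[t] generated by the single element t^p − β^{p−1}t, i.e., the set of polynomials in t^p − β^{p−1}t with coefficients in F. -/

import Mathlib

open Polynomial

/-- Let `F` be a field of characteristic `p > 2`, `β ≠ 0`, and `φ` the
`F`-algebra automorphism of `F[t]` with `φ(t) = t + β`.  Then the `φ`-fixed elements of
`F[t]` are exactly the polynomials in `t^p − β^{p−1}t`, i.e. the `F`-subalgebra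
generated by `t^p − β^{p−1}t`. -/
theorem stmt_7 {F : Type*} [Field F] (p : ℕ) [Fact p.Prime] [CharP F p] (hp : 2 < p)
    (β : F) (hβ : β ≠ 0)
    (φ : Polynomial F ≃ₐ[F] Polynomial F)
    (hφ : φ X = X + C β) :
    {f : Polynomial F | φ f = f} =
      ↑(Algebra.adjoin F {X ^ p - C (β ^ (p - 1)) * X} :
        Subalgebra F (Polynomial F)) := by
  have hp1 : 1 ≤ p := by omega
  set u : Polynomial F := X ^ p - C (β ^ (p - 1)) * X with hu
  -- φ acts as composition with X + C β
  have hcomp : ∀ f : Polynomial F, φ f = f.comp (X + C β) := by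
    intro f
    have h : (φ : Polynomial F →ₐ[F] Polynomial F) = aeval (X + C β) := by
      apply Polynomial.algHom_ext
      simpa using hφ
    have := congrArg (fun ψ : Polynomial F →ₐ[F] Polynomial F => ψ f) h
    simpa [comp_eq_aeval] using this
  -- u is fixed by φ
  have charpoly : CharP (Polynomial F) p := by infer_instance
  have hβp : β ^ (p - 1) * β = β ^ p := by
    rw [← pow_succ, Nat.sub_add_cancel hp1]
  have hufix : φ u = u := by
    rw [hu, map_sub, map_mul, map_pow, hφ]
    have hCfix : φ (C (β ^ (p-1))) = C (β ^ (p-1)) := by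
      have := φ.commutes (β ^ (p-1))
      simpa [algebraMap_eq] using this
    rw [hCfix]
    have hfrob : (X + C β) ^ p = X ^ p + (C β) ^ p := add_pow_char _ _ _
    rw [hfrob, ← C_pow, mul_add, ← C_mul, hβp]
    ring
  -- u is monic of degree p
  have humonic : u.Monic := by
    apply monic_X_pow_sub
    rw [degree_C_mul_X (pow_ne_zero _ hβ)]
    exact_mod_cast Nat.one_lt_cast.mpr (by omega)
  have hudeg : u.natDegree = p := by
    have : (C (β ^ (p-1)) * X).natDegree < (X ^ p : Polynomial F).natDegree := by
      simp only [natDegree_X_pow]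
      rw [natDegree_C_mul_X _ (pow_ne_zero _ hβ)]
      omega
    rw [hu, natDegree_sub_eq_left_of_natDegree_lt this, natDegree_X_pow]
  -- embedding of ZMod p into F
  let emb : ZMod p →+* F := ZMod.castHom (dvd_refl p) F
  have hembinj : Function.Injective emb := emb.injective
  -- u vanishes at emb k * β for all k
  have huroot : ∀ k : ZMod p, u.eval (emb k * β) = 0 := by
    intro k
    have hk : (emb k) ^ p = emb k := by
      rw [← map_pow, ZMod.pow_card]
    rw [hu]
    simp only [eval_sub, eval_mul, eval_pow, eval_X, eval_C, mul_pow, hk]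
    rw [mul_comm (β ^ (p-1)) (emb k * β), mul_assoc, mul_comm β (β ^ (p-1)), hβp,
      sub_self]
  -- points emb k * β are injective in k
  have hptinj : Function.Injective (fun k : ZMod p => emb k * β) := by
    intro a b hab
    exact hembinj (mul_right_cancel₀ hβ hab)
  -- fixed polynomials are constant on the orbit
  have heval : ∀ f : Polynomial F, φ f = f → ∀ x : F, f.eval (x + β) = f.eval x := by
    intro f hf x
    have := congrArg (fun g : Polynomial F => g.eval x) hf
    simp only [hcomp f, eval_comp, eval_add, eval_X, eval_C] at this
    exact this
  have hevaln : ∀ f : Polynomial F, φ f = f → ∀ k : ℕ, f.eval ((k : F) * β) = f.eval 0 := by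
    intro f hf k
    induction k with
    | zero => simp
    | succ n ih =>
      have : ((n + 1 : ℕ) : F) * β = (n : F) * β + β := by push_cast; ring
      rw [this, heval f hf, ih]
  have hevalz : ∀ f : Polynomial F, φ f = f → ∀ k : ZMod p, f.eval (emb k * β) = f.eval 0 := by
    intro f hf k
    have : emb k = ((k.val : ℕ) : F) := by
      simp [emb, ZMod.natCast_val, ZMod.castHom_apply]
    rw [this]
    exact hevaln f hf k.val
  -- main induction
  have H : ∀ n (f : Polynomial F), f.natDegree = n → φ f = f →
      f ∈ Algebra.adjoin F {u} := by
    intro n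
    induction n using Nat.strong_induction_on with
    | _ n ih =>
      intro f hdeg hf
      rcases Nat.eq_zero_or_pos n with hn0 | hnpos
      · subst hn0
        rw [Polynomial.eq_C_of_natDegree_eq_zero hdeg]
        exact Subalgebra.algebraMap_mem _ _
      · set c : F := f.eval 0 with hc
        set g : Polynomial F := f - C c with hg
        have hgfix : φ g = g := by
          rw [hg, map_sub, hf]
          have : φ (C c) = C c := by
            have := φ.commutes c
            simpa [algebraMap_eq] using this
          rw [this]
        have hgdeg : g.natDegree = n := by
          rw [hg, natDegree_sub_C, hdeg]
        have hgroot : ∀ k : ZMod p, g.eval (emb k * β) = 0 := by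
          intro k
          rw [hg]
          simp only [eval_sub, eval_C]
          rw [hevalz f hf k, hc, sub_self]
        -- division by u
        have hdiv : g %ₘ u + u * (g /ₘ u) = g := modByMonic_add_div g u
        have hrzero : g %ₘ u = 0 := by
          have hmod : g %ₘ u = g - u * (g /ₘ u) := eq_sub_of_add_eq hdiv
          apply Polynomial.eq_zero_of_natDegree_lt_card_of_eval_eq_zero _ hptinj
          · intro k
            rw [hmod]
            simp [hgroot k, huroot k]
          · have hlt : (g %ₘ u).degree < u.degree := degree_modByMonic_lt g humonic
            have : (g %ₘ u).natDegree < u.natDegree := by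
              rcases eq_or_ne (g %ₘ u) 0 with h0 | h0
              · rw [h0, natDegree_zero, hudeg]; omega
              · exact natDegree_lt_natDegree h0 hlt
            rw [hudeg] at this
            simpa [ZMod.card] using this
        have hgeq : g = u * (g /ₘ u) := by
          conv_lhs => rw [← hdiv]
          rw [hrzero, zero_add]
        set q : Polynomial F := g /ₘ u with hq
        have hune : u ≠ 0 := humonic.ne_zero
        have hqfix : φ q = q := by
          have h1 : φ g = u * φ q := by rw [hgeq, map_mul, hufix]
          rw [hgfix, hgeq] at h1
          exact (mul_left_cancel₀ hune h1.symm)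
        have hgne : g ≠ 0 := by
          intro h0
          rw [h0, natDegree_zero] at hgdeg
          omega
        have hqne : q ≠ 0 := by
          intro h0
          rw [h0, mul_zero] at hgeq
          exact hgne hgeq
        have hqdeg : q.natDegree < n := by
          have : g.natDegree = u.natDegree + q.natDegree := by
            rw [hgeq, natDegree_mul hune hqne]
          rw [hgdeg, hudeg] at this
          omega
        have hqmem : q ∈ Algebra.adjoin F {u} := ih q.natDegree hqdeg q rfl hqfix
        have humem : u ∈ Algebra.adjoin F {u} :=
          Algebra.self_mem_adjoin_singleton F u
        have : f = u * q + C c := by rw [← hgeq, hg]; ring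
        rw [this]
        exact Subalgebra.add_mem _ (Subalgebra.mul_mem _ humem hqmem)
          (Subalgebra.algebraMap_mem _ _)
  ext f
  simp only [Set.mem_setOf_eq, SetLike.mem_coe]
  constructor
  · intro hf
    exact H f.natDegree f rfl hf
  · intro hf
    have hle : Algebra.adjoin F {u} ≤
        AlgHom.equalizer (φ : Polynomial F →ₐ[F] Polynomial F) (AlgHom.id F (Polynomial F)) := by
      apply Algebra.adjoin_le
      intro x hx
      rcases hx with rfl
      exact hufix
    exact hle hf
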